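/- Let P_n = {1,...,n} ordered by divisibility, f : P_n → R a function into a commutative ring, and F, G : P_n → R functions with F(1) = G(1) = 1. Define the matrix M with entries M(a,b) = Σ_{c | gcd(a,b)} F(a/c)·f(c)·G(b/c). Then det M = f(1)·f(2)···f(n). -/
import Mathlib


/-- **Daniloff-type determinant.** For `{1,…,n}` ordered by divisibility, `f : ℕ → R`, and
`F, G : ℕ → R` with `F 1 = G 1 = 1`, the matrix with entries
`∑_{c ∣ gcd(a,b)} F(a/c)·f(c)·G(b/c)` has determinant `f(1)⋯f(n)`. -/
theorem det_daniloff {R : Type*} [CommRing R] (n : ℕ) (f F G : ℕ → R)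
    (hF : F 1 = 1) (hG : G 1 = 1) :
    Matrix.det (Matrix.of fun a b : Finset.Icc 1 n =>
        ∑ c ∈ (Nat.gcd a b).divisors, F ((a : ℕ) / c) * f c * G ((b : ℕ) / c)) =
      ∏ a ∈ Finset.Icc 1 n, f a := by
  classical
  have hmem : ∀ x : Finset.Icc 1 n, 1 ≤ (x : ℕ) ∧ (x : ℕ) ≤ n := fun x =>
    Finset.mem_Icc.mp x.2
  set L : Matrix (Finset.Icc 1 n) (Finset.Icc 1 n) R := fun a c =>
    if (c : ℕ) ∣ (a : ℕ) then F ((a : ℕ) / (c : ℕ)) * f c else 0 with hL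
  set U : Matrix (Finset.Icc 1 n) (Finset.Icc 1 n) R := fun c b =>
    if (c : ℕ) ∣ (b : ℕ) then G ((b : ℕ) / (c : ℕ)) else 0 with hU
  have key : (Matrix.of fun a b : Finset.Icc 1 n =>
        ∑ c ∈ (Nat.gcd a b).divisors, F ((a : ℕ) / c) * f c * G ((b : ℕ) / c)) = L * U := by
    ext a b
    rw [Matrix.mul_apply, Matrix.of_apply]
    have ha := hmem a
    have hb := hmem b
    have hgcd : Nat.gcd (a : ℕ) (b : ℕ) ≠ 0 := fun h => by
      have := Nat.eq_zero_of_gcd_eq_zero_left h; omega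
    have step1 : ∑ c : Finset.Icc 1 n, L a c * U c b =
        ∑ c ∈ Finset.Icc 1 n,
          (if c ∣ (a : ℕ) then F ((a : ℕ) / c) * f c else 0) *
          (if c ∣ (b : ℕ) then G ((b : ℕ) / c) else 0) :=
      Finset.sum_coe_sort (Finset.Icc 1 n)
        (fun c => (if c ∣ (a : ℕ) then F ((a : ℕ) / c) * f c else 0) *
          (if c ∣ (b : ℕ) then G ((b : ℕ) / c) else 0))
    have hsub : (Nat.gcd (a : ℕ) (b : ℕ)).divisors ⊆ Finset.Icc 1 n := by
      intro c hc
      rw [Nat.mem_divisors] at hc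
      have h1 : c ∣ (a : ℕ) := hc.1.trans (Nat.gcd_dvd_left _ _)
      have hc1 : 1 ≤ c := Nat.one_le_iff_ne_zero.mpr fun h => by
        subst h; exact absurd (Nat.eq_zero_of_zero_dvd h1) (by omega)
      have hcn : c ≤ n := le_trans (Nat.le_of_dvd (by omega) h1) ha.2
      exact Finset.mem_Icc.mpr ⟨hc1, hcn⟩
    have hzero : ∀ c ∈ Finset.Icc 1 n, c ∉ (Nat.gcd (a : ℕ) (b : ℕ)).divisors →
        (if c ∣ (a : ℕ) then F ((a : ℕ) / c) * f c else 0) *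
        (if c ∣ (b : ℕ) then G ((b : ℕ) / c) else 0) = 0 := by
      intro c _ hcnot
      by_cases h1 : c ∣ (a : ℕ)
      · by_cases h2 : c ∣ (b : ℕ)
        · exact absurd (Nat.mem_divisors.mpr ⟨Nat.dvd_gcd h1 h2, hgcd⟩) hcnot
        · rw [if_neg h2, mul_zero]
      · rw [if_neg h1, zero_mul]
    rw [step1, ← Finset.sum_subset hsub hzero]
    refine Finset.sum_congr rfl fun c hc => ?_
    rw [Nat.mem_divisors] at hc
    have h1 : c ∣ (a : ℕ) := hc.1.trans (Nat.gcd_dvd_left _ _)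
    have h2 : c ∣ (b : ℕ) := hc.1.trans (Nat.gcd_dvd_right _ _)
    rw [if_pos h1, if_pos h2]
  rw [key, Matrix.det_mul]
  have hdetL : L.det = ∏ a ∈ Finset.Icc 1 n, f a := by
    rw [Matrix.det_of_lowerTriangular L (fun i j hij => by
      rw [hL]
      have hi := hmem i
      have hij' : (i : ℕ) < (j : ℕ) := Subtype.coe_lt_coe.mpr hij
      have : ¬ ((j : ℕ) ∣ (i : ℕ)) := fun h => by
        have := Nat.le_of_dvd (by omega) h; omega
      simp [this])]
    rw [← Finset.prod_coe_sort (Finset.Icc 1 n) f]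
    refine Finset.prod_congr rfl fun a _ => ?_
    have ha := hmem a
    simp [hL, Nat.div_self (show 0 < (a : ℕ) by omega), hF]
  have hdetU : U.det = 1 := by
    rw [Matrix.det_of_upperTriangular (show U.BlockTriangular id from fun i j hij => by
      rw [hU]
      have hj := hmem j
      have hij' : (j : ℕ) < (i : ℕ) := Subtype.coe_lt_coe.mpr hij
      have : ¬ ((i : ℕ) ∣ (j : ℕ)) := fun h => by
        have := Nat.le_of_dvd (by omega) h; omega
      simp [this])]
    refine Finset.prod_eq_one fun c _ => ?_
    have hc := hmem c
    simp [hU, Nat.div_self (show 0 < (c : ℕ) by omega), hG]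
  rw [hdetL, hdetU, mul_one]
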